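/- Let C be a category with a terminal object and finite products (a cartesian category), equipped with a comonad (T, ε, δ), let D be the co-Kleisli category of T, and let J : C → D be the canonical identity-on-objects functor induced by the comonadic adjunction. If the endofunctor T ⋙ T (the composite of the underlying endofunctor of T with itself) has a bifree algebra, then D has exactly one dinatural fixpoint operator uniform with respect to J: such an operator exists, and any two uniform dinatural fixpoint operators on D are equal. -/

import Mathlib

open CategoryTheory CategoryTheory.Limits

/-- A bifree algebra for an endofunctor `T : C ⥤ C`: an algebra `(V, a)` that is initial
among `T`-algebras, whose structure map `a` is an isomorphism, and such that the coalgebra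
`(V, a⁻¹)` is terminal among `T`-coalgebras. -/
def IsBifreeAlgebra {C : Type*} [Category C] (T : C ⥤ C) (V : C) (a : T.obj V ⟶ V) : Prop :=
  Nonempty (IsInitial (Endofunctor.Algebra.mk V a : Endofunctor.Algebra T)) ∧
  ∃ hiso : IsIso a,
    Nonempty (IsTerminal
      (Endofunctor.Coalgebra.mk V (@inv _ _ _ _ a hiso) : Endofunctor.Coalgebra T))

set_option linter.unusedSectionVars false

noncomputable section

namespace PSAux

variable {C : Type*} [Category C] [HasTerminal C] (T : Comonad C)

def pairAlg {X Y : C} (x : (T : C ⥤ C).obj X ⟶ Y) (y : (T : C ⥤ C).obj Y ⟶ X) :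
    Endofunctor.Algebra ((T : C ⥤ C) ⋙ (T : C ⥤ C)) :=
  ⟨(T : C ⥤ C).obj X, (T : C ⥤ C).map ((T : C ⥤ C).map x ≫ y)⟩

def c0 : (T : C ⥤ C).obj (⊤_ C) ⟶
    ((T : C ⥤ C) ⋙ (T : C ⥤ C)).obj ((T : C ⥤ C).obj (⊤_ C)) :=
  T.δ.app (⊤_ C) ≫ T.map (T.δ.app (⊤_ C))

section Main

variable (V : C) (a : ((T : C ⥤ C) ⋙ (T : C ⥤ C)).obj V ⟶ V)
variable (hin : IsInitial (Endofunctor.Algebra.mk V a :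
  Endofunctor.Algebra ((T : C ⥤ C) ⋙ (T : C ⥤ C))))
variable [IsIso a]
variable (hterm : IsTerminal (Endofunctor.Coalgebra.mk V (inv a) :
  Endofunctor.Coalgebra ((T : C ⥤ C) ⋙ (T : C ⥤ C))))

def hmap {X Y : C} (x : (T : C ⥤ C).obj X ⟶ Y) (y : (T : C ⥤ C).obj Y ⟶ X) :
    V ⟶ (T : C ⥤ C).obj X :=
  (hin.to (pairAlg T x y)).f

lemma hmap_eq {X Y : C} (x : (T : C ⥤ C).obj X ⟶ Y) (y : (T : C ⥤ C).obj Y ⟶ X) :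
    T.map (T.map (hmap T V a hin x y)) ≫ (T : C ⥤ C).map ((T : C ⥤ C).map x ≫ y)
      = a ≫ hmap T V a hin x y :=
  (hin.to (pairAlg T x y)).h

def rho : (T : C ⥤ C).obj (⊤_ C) ⟶ V :=
  (hterm.from ⟨(T : C ⥤ C).obj (⊤_ C), c0 T⟩).f

lemma rho_eq : c0 T ≫ T.map (T.map (rho T V a hterm)) = rho T V a hterm ≫ inv a :=
  (hterm.from ⟨(T : C ⥤ C).obj (⊤_ C), c0 T⟩).h

lemma rho_eq' : c0 T ≫ T.map (T.map (rho T V a hterm)) ≫ a = rho T V a hterm := by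
  rw [← Category.assoc, rho_eq, Category.assoc, IsIso.inv_hom_id, Category.comp_id]

/-- The canonical algebra map `V ⟶ T V` into the rolled initial algebra. -/
def iota : V ⟶ (T : C ⥤ C).obj V :=
  (hin.to ⟨(T : C ⥤ C).obj V, T.map a⟩).f

lemma iota_eq : T.map (T.map (iota T V a hin)) ≫ T.map a = a ≫ iota T V a hin :=
  (hin.to ⟨(T : C ⥤ C).obj V, T.map a⟩).h

include hterm in
lemma sg1_uniq (q₁ q₂ : (T : C ⥤ C).obj (⊤_ C) ⟶ (T : C ⥤ C).obj V)
    (h₁ : c0 T ≫ T.map (T.map q₁) = q₁ ≫ T.map (inv a))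
    (h₂ : c0 T ≫ T.map (T.map q₂) = q₂ ≫ T.map (inv a)) : q₁ = q₂ := by
  have rec_ : ∀ q : (T : C ⥤ C).obj (⊤_ C) ⟶ (T : C ⥤ C).obj V,
      c0 T ≫ T.map (T.map q) = q ≫ T.map (inv a) →
      c0 T ≫ T.map (T.map q) ≫ T.map a = q := by
    intro q hq
    rw [← Category.assoc, hq, Category.assoc, ← Functor.map_comp, IsIso.inv_hom_id]
    simp
  -- the induced coalgebra maps `T(T⊤) ⟶ V`
  have hom : ∀ q : (T : C ⥤ C).obj (⊤_ C) ⟶ (T : C ⥤ C).obj V,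
      c0 T ≫ T.map (T.map q) = q ≫ T.map (inv a) →
      T.map (c0 T) ≫ T.map (T.map (T.map q ≫ a)) = (T.map q ≫ a) ≫ inv a := by
    intro q hq
    rw [Category.assoc, IsIso.hom_inv_id, Category.comp_id, ← Functor.map_comp]
    have : c0 T ≫ T.map (T.map q ≫ a) = q := by
      rw [Functor.map_comp, rec_ q hq]
    rw [this]
  have key : (⟨T.map q₁ ≫ a, hom q₁ h₁⟩ :
      (⟨(T : C ⥤ C).obj ((T : C ⥤ C).obj (⊤_ C)), T.map (c0 T)⟩ :
        Endofunctor.Coalgebra ((T : C ⥤ C) ⋙ (T : C ⥤ C))) ⟶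
      (Endofunctor.Coalgebra.mk V (inv a))) = ⟨T.map q₂ ≫ a, hom q₂ h₂⟩ :=
    hterm.hom_ext _ _
  have keyf : T.map q₁ ≫ a = T.map q₂ ≫ a := congrArg Endofunctor.Coalgebra.Hom.f key
  have e1 : q₁ = c0 T ≫ T.map (T.map q₁ ≫ a) := by rw [Functor.map_comp, rec_ q₁ h₁]
  have e2 : q₂ = c0 T ≫ T.map (T.map q₂ ≫ a) := by rw [Functor.map_comp, rec_ q₂ h₂]
  rw [e1, e2, keyf]



include hin hterm in
lemma sg1 : T.δ.app (⊤_ C) ≫ T.map (rho T V a hterm)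
    = rho T V a hterm ≫ iota T V a hin := by
  apply sg1_uniq T V a hterm
  · calc c0 T ≫ T.map (T.map (T.δ.app (⊤_ C) ≫ T.map (rho T V a hterm)))
        = T.δ.app (⊤_ C) ≫ T.map (c0 T ≫ T.map (T.map (rho T V a hterm))) := by
          simp only [c0, Functor.map_comp, Category.assoc]
      _ = T.δ.app (⊤_ C) ≫ T.map (rho T V a hterm ≫ inv a) := by
          rw [rho_eq]
      _ = (T.δ.app (⊤_ C) ≫ T.map (rho T V a hterm)) ≫ T.map (inv a) := by
          simp only [Functor.map_comp, Category.assoc]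
  · have hι : inv a ≫ T.map (T.map (iota T V a hin))
        = iota T V a hin ≫ T.map (inv a) := by
      rw [IsIso.inv_comp_eq, ← Category.assoc, ← iota_eq, Category.assoc,
        ← Functor.map_comp, IsIso.hom_inv_id]
      simp
    calc c0 T ≫ T.map (T.map (rho T V a hterm ≫ iota T V a hin))
        = (c0 T ≫ T.map (T.map (rho T V a hterm))) ≫ T.map (T.map (iota T V a hin)) := by
          simp only [Functor.map_comp, Category.assoc]
      _ = rho T V a hterm ≫ inv a ≫ T.map (T.map (iota T V a hin)) := by
          rw [rho_eq]; simp only [Category.assoc]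
      _ = rho T V a hterm ≫ iota T V a hin ≫ T.map (inv a) := by rw [hι]
      _ = (rho T V a hterm ≫ iota T V a hin) ≫ T.map (inv a) := by
          simp only [Category.assoc]


include hin in
lemma pairRoll {X Y : C} (x : (T : C ⥤ C).obj X ⟶ Y) (y : (T : C ⥤ C).obj Y ⟶ X) :
    hmap T V a hin x y
      = iota T V a hin ≫ T.map (hmap T V a hin y x ≫ y) := by
  have iotaR := reassoc_of% (iota_eq T V a hin)
  have hmapR := reassoc_of% (hmap_eq T V a hin y x)
  have hcond : (((T : C ⥤ C) ⋙ (T : C ⥤ C)).map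
        (iota T V a hin ≫ T.map (hmap T V a hin y x ≫ y))) ≫ (pairAlg T x y).str
      = a ≫ (iota T V a hin ≫ T.map (hmap T V a hin y x ≫ y)) := by
    rw [← iotaR, ← Functor.map_comp, ← hmapR]
    simp [pairAlg, Functor.map_comp]
  exact congrArg Endofunctor.Algebra.Hom.f
    (hin.hom_ext (hin.to (pairAlg T x y)) ⟨_, hcond⟩)

/-- The pair fixed point. -/
def pfix {X Y : C} (x : (T : C ⥤ C).obj X ⟶ Y) (y : (T : C ⥤ C).obj Y ⟶ X) :
    (T : C ⥤ C).obj (⊤_ C) ⟶ Y :=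
  rho T V a hterm ≫ hmap T V a hin x y ≫ x

include hin hterm in
lemma pairDinat {X Y : C} (x : (T : C ⥤ C).obj X ⟶ Y) (y : (T : C ⥤ C).obj Y ⟶ X) :
    pfix T V a hin hterm x y
      = T.δ.app (⊤_ C) ≫ T.map (pfix T V a hin hterm y x) ≫ x := by
  unfold pfix
  rw [pairRoll T V a hin x y, ← Category.assoc, ← Category.assoc,
    ← sg1 T V a hin hterm]
  simp only [Functor.map_comp, Category.assoc]

include hin hterm in
lemma pairFix {X Y : C} (x : (T : C ⥤ C).obj X ⟶ Y) (y : (T : C ⥤ C).obj Y ⟶ X) :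
    T.δ.app (⊤_ C) ≫ T.map (pfix T V a hin hterm x y)
        ≫ (T.δ.app Y ≫ T.map y ≫ x)
      = pfix T V a hin hterm x y := by
  have hnat := T.δ.naturality (pfix T V a hin hterm x y)
  simp only [Functor.comp_map] at hnat
  have hmapR := reassoc_of% (hmap_eq T V a hin x y)
  calc T.δ.app (⊤_ C) ≫ T.map (pfix T V a hin hterm x y) ≫ T.δ.app Y ≫ T.map y ≫ x
      = T.δ.app (⊤_ C) ≫ T.δ.app ((T : C ⥤ C).obj (⊤_ C))
          ≫ T.map (T.map (pfix T V a hin hterm x y)) ≫ T.map y ≫ x := by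
        rw [← Category.assoc (T.map _), hnat]
        simp only [Category.assoc]
      _ = c0 T ≫ T.map (T.map (rho T V a hterm))
            ≫ T.map (T.map (hmap T V a hin x y))
            ≫ (T : C ⥤ C).map ((T : C ⥤ C).map x ≫ y) ≫ x := by
        rw [← Comonad.coassoc_assoc]
        simp only [c0, pfix, Functor.map_comp, Category.assoc]
      _ = c0 T ≫ T.map (T.map (rho T V a hterm)) ≫ a ≫ hmap T V a hin x y ≫ x := by
        rw [hmapR]
      _ = pfix T V a hin hterm x y := by
        have := reassoc_of% (rho_eq' T V a hterm)
        rw [pfix, ← this]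

include hin in
lemma omegaSquare {X Y : C} (x : (T : C ⥤ C).obj X ⟶ Y) (y : (T : C ⥤ C).obj Y ⟶ X) :
    (T.δ.app V ≫ a) ≫ (hmap T V a hin x y ≫ x)
      = T.map (hmap T V a hin x y ≫ x) ≫ (T.δ.app Y ≫ T.map y ≫ x) := by
  have hmapR := reassoc_of% (hmap_eq T V a hin x y)
  have h1 := T.δ.naturality (hmap T V a hin x y)
  have h2 := T.δ.naturality x
  simp only [Functor.comp_map] at h1 h2
  have h1r := reassoc_of% h1
  have h2r := reassoc_of% h2
  calc (T.δ.app V ≫ a) ≫ (hmap T V a hin x y ≫ x)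
      = T.δ.app V ≫ T.map (T.map (hmap T V a hin x y))
          ≫ (T : C ⥤ C).map ((T : C ⥤ C).map x ≫ y) ≫ x := by
        rw [Category.assoc, ← hmapR]
      _ = T.map (hmap T V a hin x y) ≫ T.δ.app ((T : C ⥤ C).obj X)
          ≫ (T : C ⥤ C).map ((T : C ⥤ C).map x ≫ y) ≫ x := by
        rw [← h1r]
      _ = T.map (hmap T V a hin x y) ≫ T.map x ≫ T.δ.app Y ≫ T.map y ≫ x := by
        rw [h2r]
        simp only [Functor.map_comp, Category.assoc]
      _ = T.map (hmap T V a hin x y ≫ x) ≫ (T.δ.app Y ≫ T.map y ≫ x) := by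
        simp only [Functor.map_comp, Category.assoc]


end Main

section DLayer

variable {C : Type*} [Category C] [HasTerminal C] (T : Comonad C)

/-- View an object of `C` as an object of the co-Kleisli category. -/
abbrev toD (X : C) : Cokleisli T := Cokleisli.mk T X

/-- View a co-Kleisli morphism as a morphism of `C`. -/
def unD {X Y : Cokleisli T} (f : X ⟶ Y) : (T : C ⥤ C).obj X.of ⟶ Y.of := f.of

/-- View a morphism of `C` as a co-Kleisli morphism. -/
def mkD {X Y : C} (f : (T : C ⥤ C).obj X ⟶ Y) : toD T X ⟶ toD T Y := ⟨f⟩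

lemma comp_eq {X Y Z : Cokleisli T} (f : X ⟶ Y) (g : Y ⟶ Z) :
    unD T (f ≫ g) = T.δ.app X.of ≫ T.map (unD T f) ≫ unD T g := rfl

lemma Jmap_eq {X Y : C} (s : X ⟶ Y) :
    unD T ((Cokleisli.Adjunction.toCokleisli T).map s) = T.ε.app X ≫ s := rfl

lemma coll2 {W X Y : C} (p : (T : C ⥤ C).obj W ⟶ X) (s : X ⟶ Y) :
    T.δ.app W ≫ T.map p ≫ (T.ε.app X ≫ s) = p ≫ s := by
  have h := T.ε.naturality p
  simp only [Functor.id_map] at h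
  have hr := reassoc_of% h
  rw [hr, Comonad.left_counit_assoc]

lemma coll3 {W X Y : C} (s : W ⟶ X) (q : (T : C ⥤ C).obj X ⟶ Y) :
    T.δ.app W ≫ T.map (T.ε.app W ≫ s) ≫ q = T.map s ≫ q := by
  simp only [Functor.map_comp, Category.assoc, Comonad.right_counit_assoc]

end DLayer

section Op

variable {C : Type*} [Category C] [HasTerminal C] (T : Comonad C)
variable (V : C) (a : ((T : C ⥤ C) ⋙ (T : C ⥤ C)).obj V ⟶ V)
variable (hin : IsInitial (Endofunctor.Algebra.mk V a :
  Endofunctor.Algebra ((T : C ⥤ C) ⋙ (T : C ⥤ C))))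
variable [IsIso a]
variable (hterm : IsTerminal (Endofunctor.Coalgebra.mk V (inv a) :
  Endofunctor.Coalgebra ((T : C ⥤ C) ⋙ (T : C ⥤ C))))

/-- The fixed-point operator on the co-Kleisli category. -/
def Fix (A : Cokleisli T) (e : A ⟶ A) : (Cokleisli.mk T (⊤_ C)) ⟶ A :=
  mkD T (pfix T V a hin hterm (unD T e) (T.ε.app A.of))

include hin hterm in
lemma Fix_fp (A : Cokleisli T) (e : A ⟶ A) :
    Fix T V a hin hterm A e ≫ e = Fix T V a hin hterm A e := by
  apply Cokleisli.hom_ext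
  show T.δ.app (⊤_ C) ≫ T.map (pfix T V a hin hterm (unD T e) (T.ε.app A.of))
      ≫ unD T e = pfix T V a hin hterm (unD T e) (T.ε.app A.of)
  have h := pairFix T V a hin hterm (unD T e) (T.ε.app A.of)
  rwa [Comonad.right_counit_assoc] at h

include hin in
lemma htransport {A B : C} (f' : (T : C ⥤ C).obj A ⟶ A) (g' : (T : C ⥤ C).obj B ⟶ B)
    (s : A ⟶ B) (hsq : f' ≫ s = T.map s ≫ g') :
    hmap T V a hin f' (T.ε.app A) ≫ T.map s = hmap T V a hin g' (T.ε.app B) := by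
  have hεs := T.ε.naturality s
  simp only [Functor.id_map] at hεs
  have hm := reassoc_of% (hmap_eq T V a hin f' (T.ε.app A))
  have key2 : (T.map f' ≫ T.ε.app A) ≫ s = T.map (T.map s) ≫ T.map g' ≫ T.ε.app B := by
    rw [Category.assoc, ← hεs, ← Category.assoc, ← Functor.map_comp, hsq,
      Functor.map_comp, Category.assoc]
  have hcond : ((T : C ⥤ C) ⋙ (T : C ⥤ C)).map
        (hmap T V a hin f' (T.ε.app A) ≫ T.map s) ≫ (pairAlg T g' (T.ε.app B)).str
      = a ≫ (hmap T V a hin f' (T.ε.app A) ≫ T.map s) := by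
    rw [← hm (T.map s)]
    calc T.map (T.map (hmap T V a hin f' (T.ε.app A) ≫ T.map s))
          ≫ T.map (T.map g' ≫ T.ε.app B)
        = T.map (T.map (hmap T V a hin f' (T.ε.app A)))
            ≫ T.map (T.map (T.map s) ≫ T.map g' ≫ T.ε.app B) := by
          simp only [pairAlg, Functor.comp_map, Functor.map_comp, Category.assoc]
      _ = T.map (T.map (hmap T V a hin f' (T.ε.app A)))
            ≫ T.map ((T.map f' ≫ T.ε.app A) ≫ s) := by rw [← key2]
      _ = T.map (T.map (hmap T V a hin f' (T.ε.app A)))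
            ≫ T.map (T.map f' ≫ T.ε.app A) ≫ T.map s := by
          simp only [Functor.map_comp, Category.assoc]
  exact congrArg Endofunctor.Algebra.Hom.f
    (hin.hom_ext ⟨_, hcond⟩ (hin.to (pairAlg T g' (T.ε.app B))))

include hin hterm in
lemma Fix_unif (A B : Cokleisli T) (s : A.of ⟶ B.of)
    (f : A ⟶ A) (g : B ⟶ B)
    (hsq : f ≫ (Cokleisli.Adjunction.toCokleisli T).map s
         = (Cokleisli.Adjunction.toCokleisli T).map s ≫ g) :
    Fix T V a hin hterm A f ≫ (Cokleisli.Adjunction.toCokleisli T).map s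
      = Fix T V a hin hterm B g := by
  have hsqC : unD T f ≫ s = T.map s ≫ unD T g := by
    have h1 : T.δ.app A.of ≫ T.map (unD T f) ≫ (T.ε.app A.of ≫ s)
        = T.δ.app A.of ≫ T.map (T.ε.app A.of ≫ s) ≫ unD T g := congrArg Cokleisli.Hom.of hsq
    rwa [coll2, coll3] at h1
  have ht := htransport T V a hin (unD T f) (unD T g) s hsqC
  apply Cokleisli.hom_ext
  show T.δ.app (⊤_ C) ≫ T.map (unD T (Fix T V a hin hterm A f))
      ≫ (T.ε.app A.of ≫ s) = unD T (Fix T V a hin hterm B g)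
  rw [coll2]
  show (rho T V a hterm ≫ hmap T V a hin (unD T f) (T.ε.app A.of) ≫ unD T f) ≫ s
      = rho T V a hterm ≫ hmap T V a hin (unD T g) (T.ε.app B.of) ≫ unD T g
  rw [Category.assoc, Category.assoc, hsqC, ← Category.assoc (hmap T V a hin (unD T f) _), ht]

include hin hterm in
lemma fix'_omega (fix' : ∀ A : Cokleisli T, (A ⟶ A) → ((Cokleisli.mk T (⊤_ C)) ⟶ A))
    (hfp : ∀ A f, fix' A f ≫ f = fix' A f) :
    unD T (fix' (toD T V) (mkD T (T.δ.app V ≫ a))) = rho T V a hterm := by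
  set p := unD T (fix' (toD T V) (mkD T (T.δ.app V ≫ a))) with hpdef
  have h0 : T.δ.app (⊤_ C) ≫ T.map p ≫ T.δ.app V ≫ a = p :=
    congrArg Cokleisli.Hom.of (hfp (toD T V) (mkD T (T.δ.app V ≫ a)))
  have hdn := T.δ.naturality p
  simp only [Functor.comp_map] at hdn
  have hdnr := reassoc_of% hdn
  have hrec : c0 T ≫ T.map (T.map p) ≫ a = p := by
    show (T.δ.app (⊤_ C) ≫ T.map (T.δ.app (⊤_ C))) ≫ T.map (T.map p) ≫ a = p
    rw [Category.assoc, Comonad.coassoc_assoc, ← hdnr]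
    exact h0
  have hcond : c0 T ≫ ((T : C ⥤ C) ⋙ (T : C ⥤ C)).map p = p ≫ inv a := by
    rw [IsIso.eq_comp_inv]
    simp only [Functor.comp_map, Category.assoc]
    exact hrec
  exact congrArg Endofunctor.Coalgebra.Hom.f
    (hterm.hom_ext
      (⟨p, hcond⟩ : (⟨(T : C ⥤ C).obj (⊤_ C), c0 T⟩ :
          Endofunctor.Coalgebra ((T : C ⥤ C) ⋙ (T : C ⥤ C))) ⟶ _)
      (hterm.from ⟨(T : C ⥤ C).obj (⊤_ C), c0 T⟩))

include hin hterm in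
lemma pin (fix' : ∀ A : Cokleisli T, (A ⟶ A) → ((Cokleisli.mk T (⊤_ C)) ⟶ A))
    (hfp : ∀ A f, fix' A f ≫ f = fix' A f)
    (hunif : ∀ (A B : Cokleisli T) (s : A.of ⟶ B.of)
      (f : A ⟶ A) (g : B ⟶ B),
      f ≫ (Cokleisli.Adjunction.toCokleisli T).map s
        = (Cokleisli.Adjunction.toCokleisli T).map s ≫ g →
      fix' A f ≫ (Cokleisli.Adjunction.toCokleisli T).map s = fix' B g)
    {X Y : C} (x : (T : C ⥤ C).obj X ⟶ Y) (y : (T : C ⥤ C).obj Y ⟶ X) :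
    unD T (fix' (toD T Y) (mkD T (T.δ.app Y ≫ T.map y ≫ x)))
      = pfix T V a hin hterm x y := by
  have hstep1 := fix'_omega T V a hin hterm fix' hfp
  have hsqD : (mkD T (T.δ.app V ≫ a) : toD T V ⟶ toD T V)
        ≫ (Cokleisli.Adjunction.toCokleisli T).map (hmap T V a hin x y ≫ x)
      = (Cokleisli.Adjunction.toCokleisli T).map (hmap T V a hin x y ≫ x)
        ≫ mkD T (T.δ.app Y ≫ T.map y ≫ x) := by
    apply Cokleisli.hom_ext
    show T.δ.app V ≫ T.map (T.δ.app V ≫ a) ≫ (T.ε.app V ≫ (hmap T V a hin x y ≫ x))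
        = T.δ.app V ≫ T.map (T.ε.app V ≫ (hmap T V a hin x y ≫ x))
            ≫ (T.δ.app Y ≫ T.map y ≫ x)
    rw [coll2, coll3]
    exact omegaSquare T V a hin x y
  have hu := hunif (toD T V) (toD T Y) (hmap T V a hin x y ≫ x) _ _ hsqD
  have huC : unD T (fix' (toD T V) (mkD T (T.δ.app V ≫ a))) ≫ (hmap T V a hin x y ≫ x)
      = unD T (fix' (toD T Y) (mkD T (T.δ.app Y ≫ T.map y ≫ x))) := by
    have h2 : T.δ.app (⊤_ C)
        ≫ T.map (unD T (fix' (toD T V) (mkD T (T.δ.app V ≫ a))))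
        ≫ (T.ε.app V ≫ (hmap T V a hin x y ≫ x))
        = unD T (fix' (toD T Y) (mkD T (T.δ.app Y ≫ T.map y ≫ x))) := congrArg Cokleisli.Hom.of hu
    rwa [coll2] at h2
  rw [← huC, hstep1]
  rfl

include hin hterm in
lemma Fix_dinat (A B : Cokleisli T) (f : A ⟶ B) (g : B ⟶ A) :
    Fix T V a hin hterm B (g ≫ f) = Fix T V a hin hterm A (f ≫ g) ≫ f := by
  have h1 : unD T (Fix T V a hin hterm B (g ≫ f))
      = pfix T V a hin hterm (unD T f) (unD T g) :=
    pin T V a hin hterm (Fix T V a hin hterm) (Fix_fp T V a hin hterm)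
      (Fix_unif T V a hin hterm) (unD T f) (unD T g)
  have h2 : unD T (Fix T V a hin hterm A (f ≫ g))
      = pfix T V a hin hterm (unD T g) (unD T f) :=
    pin T V a hin hterm (Fix T V a hin hterm) (Fix_fp T V a hin hterm)
      (Fix_unif T V a hin hterm) (unD T g) (unD T f)
  apply Cokleisli.hom_ext
  show unD T (Fix T V a hin hterm B (g ≫ f))
      = T.δ.app (⊤_ C) ≫ T.map (unD T (Fix T V a hin hterm A (f ≫ g))) ≫ unD T f
  rw [h1, h2]
  exact pairDinat T V a hin hterm (unD T f) (unD T g)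

end Op


end PSAux

/-- Plotkin–Simpson, part 2: if `C` is cartesian (terminal object and finite products),
`T` is a comonad on `C`, and the endofunctor `T ⋙ T` has a bifree algebra, then the
co-Kleisli category of `T` has exactly one dinatural fixpoint operator uniform with respect
to the canonical functor `J : C → Cokleisli T`. -/
theorem unique_uniform_dinatural_fixpoint_of_bifree
    {C : Type*} [Category C] [HasTerminal C] [HasFiniteProducts C] (T : Comonad C)
    (V : C) (a : ((T : C ⥤ C) ⋙ (T : C ⥤ C)).obj V ⟶ V)
    (hbifree : IsBifreeAlgebra ((T : C ⥤ C) ⋙ (T : C ⥤ C)) V a) :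
    ∃! fix : ∀ A : Cokleisli T, (A ⟶ A) → ((Cokleisli.mk T (⊤_ C)) ⟶ A),
      (∀ (A : Cokleisli T) (f : A ⟶ A), fix A f ≫ f = fix A f) ∧
      (∀ (A B : Cokleisli T) (f : A ⟶ B) (g : B ⟶ A),
        fix B (g ≫ f) = fix A (f ≫ g) ≫ f) ∧
      (∀ (A B : Cokleisli T) (s : A.of ⟶ B.of)
        (f : A ⟶ A) (g : B ⟶ B),
        f ≫ (Cokleisli.Adjunction.toCokleisli T).map s =
          (Cokleisli.Adjunction.toCokleisli T).map s ≫ g →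
        fix A f ≫ (Cokleisli.Adjunction.toCokleisli T).map s = fix B g) := by
  obtain ⟨⟨hin⟩, hiso, ⟨hterm⟩⟩ := hbifree
  haveI := hiso
  refine ⟨PSAux.Fix T V a hin hterm,
    ⟨PSAux.Fix_fp T V a hin hterm, PSAux.Fix_dinat T V a hin hterm,
      PSAux.Fix_unif T V a hin hterm⟩, ?_⟩
  rintro fix' ⟨hfp, _hdin, hunif⟩
  funext A e
  have h3 : e = PSAux.mkD T (T.δ.app A.of
      ≫ T.map (T.ε.app A.of) ≫ PSAux.unD T e) := by
    apply Cokleisli.hom_ext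
    show PSAux.unD T e
        = T.δ.app A.of ≫ T.map (T.ε.app A.of) ≫ PSAux.unD T e
    rw [Comonad.right_counit_assoc]
  calc fix' A e
      = fix' A (PSAux.mkD T (T.δ.app A.of
          ≫ T.map (T.ε.app A.of) ≫ PSAux.unD T e)) := by rw [← h3]
    _ = PSAux.Fix T V a hin hterm A e :=
        Cokleisli.hom_ext T (PSAux.pin T V a hin hterm fix' hfp hunif (PSAux.unD T e)
          (T.ε.app A.of))

end
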